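/- Every locally Lipschitz continuous function μ : ℝ → ℝ with μ(0) ≤ 0 is a minimal function, i.e. every differentiable w : [0,τ) → ℝ with w(0) = 0 and ẇ(t) = −μ(w(t)) for all t ∈ [0,τ) satisfies w(t) ≥ 0 for all t ∈ [0,τ). -/

import Mathlib

open Set Filter Real Topology

/-- Corollary 1: every locally Lipschitz `μ : ℝ → ℝ` with `μ(0) ≤ 0` is a
minimal function. -/
theorem minimal_function_of_locallyLipschitz
    (μ : ℝ → ℝ) (hμ : LocallyLipschitz μ) (hμ0 : μ 0 ≤ 0)
    (τ : ℝ) (w : ℝ → ℝ) (hw0 : w 0 = 0)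
    (hw : ∀ t ∈ Set.Ico (0 : ℝ) τ, HasDerivAt w (-μ (w t)) t) :
    ∀ t ∈ Set.Ico (0 : ℝ) τ, 0 ≤ w t := by
  by_contra hcon
  push_neg at hcon
  obtain ⟨t0, ⟨ht00, ht0τ⟩, hwt0⟩ := hcon
  -- the set of times in [0, t0] where w is nonnegative
  set A : Set ℝ := {t | t ∈ Icc 0 t0 ∧ 0 ≤ w t} with hA
  have hsubIco : Icc 0 t0 ⊆ Ico 0 τ := fun x hx => ⟨hx.1, lt_of_le_of_lt hx.2 ht0τ⟩
  have hcont : ContinuousOn w (Icc 0 t0) := fun x hx =>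
    ((hw x (hsubIco hx)).continuousAt).continuousWithinAt
  have hAne : A.Nonempty := ⟨0, ⟨le_refl 0, ht00⟩, le_of_eq hw0.symm⟩
  have hAbdd : BddAbove A := ⟨t0, fun x hx => hx.1.2⟩
  have hAclosed : IsClosed A := by
    have hAeq : A = Icc 0 t0 ∩ w ⁻¹' Ici 0 := by
      ext x
      simp only [hA, mem_setOf_eq, mem_inter_iff, mem_preimage, mem_Ici]
    rw [hAeq]
    exact hcont.preimage_isClosed_of_isClosed isClosed_Icc isClosed_Ici
  set s := sSup A with hs
  have hsA : s ∈ A := hAclosed.csSup_mem hAne hAbdd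
  have hs0 : 0 ≤ s := hsA.1.1
  have hst0 : s ≤ t0 := hsA.1.2
  have hslt : s < t0 :=
    lt_of_le_of_ne hst0 (fun h => absurd hsA.2 (by rw [h]; exact not_le.2 hwt0))
  have hneg : ∀ x, s < x → x ≤ t0 → w x < 0 := by
    intro x hsx hxt0
    by_contra h
    push_neg at h
    exact absurd (le_csSup hAbdd ⟨⟨le_trans hs0 hsx.le, hxt0⟩, h⟩) (not_le.2 hsx)
  have hws : w s = 0 := by
    refine le_antisymm ?_ hsA.2
    have hc : ContinuousWithinAt w (Ioi s) s :=
      ((hw s (hsubIco hsA.1)).continuousAt).continuousWithinAt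
    refine le_of_tendsto hc ?_
    filter_upwards [Ioo_mem_nhdsGT_of_mem (left_mem_Ico.2 hslt)] with x hx
    exact (hneg x hx.1 hx.2.le).le
  -- local Lipschitz data at 0
  obtain ⟨K, U, hU, hLip⟩ := hμ 0
  obtain ⟨ε, hε, hball⟩ := Metric.mem_nhds_iff.1 hU
  -- choose t1 ∈ (s, t0] with |w x| < ε on [s, t1]
  have hcs : ContinuousAt w s := (hw s (hsubIco hsA.1)).continuousAt
  obtain ⟨δ, hδ, hδball⟩ := Metric.continuousAt_iff.1 hcs ε hε
  set t1 := min t0 (s + δ / 2) with ht1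
  have hst1 : s < t1 := lt_min hslt (by linarith)
  have ht1t0 : t1 ≤ t0 := min_le_left _ _
  have hsub01 : Icc s t1 ⊆ Icc 0 t0 := fun x hx =>
    ⟨le_trans hs0 hx.1, le_trans hx.2 ht1t0⟩
  have hsmall : ∀ x ∈ Icc s t1, w x ∈ Metric.ball (0 : ℝ) ε := by
    intro x hx
    have hd : dist x s < δ := by
      rw [Real.dist_eq, abs_of_nonneg (by linarith [hx.1])]
      have : x ≤ s + δ / 2 := le_trans hx.2 (min_le_right _ _)
      linarith
    simpa [Metric.mem_ball, hws] using hδball hd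
  have hwle : ∀ x ∈ Icc s t1, w x ≤ 0 := by
    intro x hx
    rcases eq_or_lt_of_le hx.1 with rfl | h
    · exact hws.le
    · exact (hneg x h (le_trans hx.2 ht1t0)).le
  -- Grönwall for f = -w on [s, t1]
  have hderiv : ∀ x ∈ Ico s t1, HasDerivAt (fun t => -w t) (μ (w x)) x := by
    intro x hx
    have h := (hw x (hsubIco (hsub01 ⟨hx.1, hx.2.le⟩))).neg
    rw [neg_neg] at h
    exact h
  have hcont' : ContinuousOn (fun t => -w t) (Icc s t1) := (hcont.mono hsub01).neg
  have hslope : ∀ x ∈ Ico s t1, ∀ r, μ (w x) < r →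
      ∃ᶠ z in 𝓝[>] x, (z - x)⁻¹ * (-w z - -w x) < r := by
    intro x hx r hr
    have hd : HasDerivWithinAt (fun t => -w t) (μ (w x)) (Ioi x) x :=
      (hderiv x hx).hasDerivWithinAt
    rw [hasDerivWithinAt_iff_tendsto_slope,
      Set.diff_singleton_eq_self (notMem_Ioi.mpr le_rfl)] at hd
    have he : ∀ᶠ z in 𝓝[>] x, slope (fun t => -w t) x z < r :=
      hd.eventually (Iio_mem_nhds hr)
    refine he.frequently.mono fun z hz => ?_
    rwa [slope_def_field, div_eq_inv_mul] at hz
  have hbound : ∀ x ∈ Ico s t1, μ (w x) ≤ (K : ℝ) * (-w x) + 0 := by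
    intro x hx
    have hxmem : x ∈ Icc s t1 := ⟨hx.1, hx.2.le⟩
    have h1 : w x ∈ U := hball (hsmall x hxmem)
    have h0 : (0 : ℝ) ∈ U := hball (Metric.mem_ball_self hε)
    have hdl := hLip.dist_le_mul (w x) h1 0 h0
    rw [Real.dist_eq, Real.dist_eq, sub_zero] at hdl
    have habs : |w x| = -(w x) := abs_of_nonpos (hwle x hxmem)
    have : μ (w x) - μ 0 ≤ (K : ℝ) * (-(w x)) :=
      le_trans (le_abs_self _) (by rw [← habs]; exact hdl)
    linarith
  have hG := le_gronwallBound_of_liminf_deriv_right_le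
    (f := fun t => -w t) (f' := fun x => μ (w x)) (δ := 0) (K := (K : ℝ)) (ε := 0)
    (a := s) (b := t1) hcont' hslope (by simp [hws]) hbound
  have h2 := hG t1 ⟨hst1.le, le_refl _⟩
  rw [gronwallBound_ε0_δ0] at h2
  have h3 : -w t1 ≤ 0 := h2
  exact absurd (by linarith : (0 : ℝ) ≤ w t1) (not_le.2 (hneg t1 hst1 ht1t0))
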